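/- A complex number λ is an eigenvalue of S acting on ℓ^∞(ℕ) — i.e., there exists a nonzero bounded complex sequence v with Σ_{j≥0} S_{i,j} v_j = λ v_i for all i ≥ 0 — if and only if the sequence (q_n(λ))_{n≥1} is bounded. In other words, the point spectrum of S on ℓ^∞(ℕ) equals {λ ∈ ℂ : (q_n(λ))_{n≥1} is bounded}. -/

import Mathlib

/-- Fibonacci sequence with `F 0 = 1`, `F 1 = 2`, `F (n+2) = F (n+1) + F n`. -/
def fibF : ℕ → ℕ
  | 0 => 1
  | 1 => 2
  | (n+2) => fibF (n+1) + fibF n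

lemma fibF_pos : ∀ n, 0 < fibF n
  | 0 => by simp [fibF]
  | 1 => by simp [fibF]
  | (n+2) => by
      have h1 := fibF_pos (n+1)
      simp only [fibF]
      omega

/-- Zeckendorf digits of `N` in the base `fibF`: `N = ∑ i, zeck N i * fibF i`,
with `zeck N i ∈ {0,1}` and no two consecutive `1`'s. -/
def zeck (N i : ℕ) : ℕ :=
  if h : N = 0 then 0
  else if i = Nat.findGreatest (fun j => fibF j ≤ N) N then 1
  else zeck (N - fibF (Nat.findGreatest (fun j => fibF j ≤ N) N)) i
termination_by N
decreasing_by
  exact Nat.sub_lt (Nat.pos_of_ne_zero h) (fibF_pos _)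

lemma zeck_eq_zero_of_lt : ∀ N, ∀ i, N < i → zeck N i = 0 := by
  intro N
  induction N using Nat.strong_induction_on with
  | _ N ih =>
    intro i hi
    rw [zeck]
    split
    · rfl
    · rename_i h
      have hkN : Nat.findGreatest (fun j => fibF j ≤ N) N ≤ N := Nat.findGreatest_le N
      rw [if_neg (by omega)]
      exact ih _ (Nat.sub_lt (Nat.pos_of_ne_zero h) (fibF_pos _)) i
        (lt_of_le_of_lt (Nat.sub_le _ _) hi)

lemma exists_break0 (N : ℕ) : ∃ i, ¬(zeck N (2*i+1) = 1 ∧ zeck N (2*i) = 0) := by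
  refine ⟨N + 1, ?_⟩
  have h : zeck N (2*(N+1)+1) = 0 := zeck_eq_zero_of_lt N _ (by omega)
  simp [h]

lemma exists_break1 (N : ℕ) : ∃ i, ¬(zeck N (2*i+2) = 1 ∧ zeck N (2*i+1) = 0) := by
  refine ⟨N + 1, ?_⟩
  have h : zeck N (2*(N+1)+2) = 0 := zeck_eq_zero_of_lt N _ (by omega)
  simp [h]

/-- The number `s` of `10`-blocks carried in the stochastic Fibonacci adding machine:
if the digits of `N` end with `00(10)^s` (case `ε₀ = 0`) or with `00(10)^s1`
(case `ε₀ = 1`), this returns `s`. -/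
def carryLen (N : ℕ) : ℕ :=
  if zeck N 0 = 0 then Nat.find (exists_break0 N) else Nat.find (exists_break1 N)

/-- `Pprod p t = p 1 * p 2 * ⋯ * p t`. -/
def Pprod (p : ℕ → ℝ) (t : ℕ) : ℝ := ∏ i ∈ Finset.Icc 1 t, p i

/-- The transition matrix `S` of the Fibonacci stochastic adding machine associated to
the probability sequence `p`:  `S N N = 1 - p 1`;  if the digits of `N` end with
`00(10)^s` then `S N (N+1) = p 1 ⋯ p (s+1)` and `S N (N+1-F (2m)) = p 1 ⋯ p m * (1 - p (m+1))`
for `1 ≤ m ≤ s`;  if the digits of `N` end with `00(10)^s1` then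
`S N (N+1) = p 1 ⋯ p (s+2)` and `S N (N+1-F (2m-1)) = p 1 ⋯ p m * (1 - p (m+1))` for
`1 ≤ m ≤ s+1`;  all other entries vanish. -/
noncomputable def Smat (p : ℕ → ℝ) (N M : ℕ) : ℝ :=
  (if M = N then 1 - p 1 else 0) +
  if zeck N 0 = 0 then
    (if M = N + 1 then Pprod p (carryLen N + 1) else 0) +
    ∑ m ∈ Finset.Icc 1 (carryLen N),
      (if M = N + 1 - fibF (2*m) then Pprod p m * (1 - p (m+1)) else 0)
  else
    (if M = N + 1 then Pprod p (carryLen N + 2) else 0) +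
    ∑ m ∈ Finset.Icc 1 (carryLen N + 1),
      (if M = N + 1 - fibF (2*m - 1) then Pprod p m * (1 - p (m+1)) else 0)

/-- `rr p n = r_n = p (⌊(n+1)/2⌋ + 1)`. -/
noncomputable def rr (p : ℕ → ℝ) (n : ℕ) : ℝ := p ((n+1)/2 + 1)

/-- `qF p z n = q_{F_n}(z)`. -/
noncomputable def qF (p : ℕ → ℝ) (z : ℂ) : ℕ → ℂ
  | 0 => (z - (1 - (p 1 : ℂ))) / (p 1 : ℂ)
  | 1 => (1 / (p 2 : ℂ)) * (qF p z 0) ^ 2 - (1 / (p 2 : ℂ) - 1)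
  | (n+2) => (1 / (rr p (n+2) : ℂ)) * qF p z (n+1) * qF p z n - (1 / (rr p (n+2) : ℂ) - 1)

/-- `qN p z N = q_N(z) = ∏ᵢ q_{F_i}(z)^{ε_i(N)}` where `(ε_i(N))` are the Zeckendorf
digits of `N`. -/
noncomputable def qN (p : ℕ → ℝ) (z : ℂ) (N : ℕ) : ℂ :=
  ∏ i ∈ Finset.range (N+1), (qF p z i) ^ (zeck N i)

section ZeckBasic

lemma fibF_succ_lt (n : ℕ) : fibF n < fibF (n+1) := by
  cases n with
  | zero => simp [fibF]
  | succ m => have := fibF_pos m; simp only [fibF]; omega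

lemma fibF_strictMono : StrictMono fibF := strictMono_nat_of_lt_succ fibF_succ_lt

lemma fibF_mono : Monotone fibF := fibF_strictMono.monotone

lemma fibF_ge (n : ℕ) : n + 1 ≤ fibF n := by
  induction n with
  | zero => simp [fibF]
  | succ m ih => have := fibF_succ_lt m; omega

lemma greedy_le {N : ℕ} (h : N ≠ 0) :
    fibF (Nat.findGreatest (fun j => fibF j ≤ N) N) ≤ N := by
  have h0 : (fun j => fibF j ≤ N) 0 := by
    have := Nat.one_le_iff_ne_zero.2 h; simpa [fibF]
  exact Nat.findGreatest_spec (P := fun j => fibF j ≤ N) (Nat.zero_le N) h0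

lemma greedy_lt_succ {N : ℕ} (h : N ≠ 0) :
    N < fibF (Nat.findGreatest (fun j => fibF j ≤ N) N + 1) := by
  by_contra hc
  push_neg at hc
  have h1 := greedy_le h
  have h2 := fibF_ge (Nat.findGreatest (fun j => fibF j ≤ N) N)
  exact Nat.findGreatest_is_greatest (P := fun j => fibF j ≤ N) (n := N)
    (k := Nat.findGreatest (fun j => fibF j ≤ N) N + 1) (by omega) (by omega) hc

lemma zeck_zero (i : ℕ) : zeck 0 i = 0 := by rw [zeck]; simp

lemma zeck_top {N : ℕ} (h : N ≠ 0) :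
    zeck N (Nat.findGreatest (fun j => fibF j ≤ N) N) = 1 := by
  rw [zeck]; simp [h]

lemma zeck_off_top {N i : ℕ} (h : N ≠ 0)
    (hi : i ≠ Nat.findGreatest (fun j => fibF j ≤ N) N) :
    zeck N i = zeck (N - fibF (Nat.findGreatest (fun j => fibF j ≤ N) N)) i := by
  rw [zeck]; simp [h, hi]

lemma fib_rem_lt {N k : ℕ} (h1 : fibF k ≤ N) (h2 : N < fibF (k+1)) :
    N - fibF k < fibF (k-1) := by
  cases k with
  | zero =>
    have e0 : fibF 0 = 1 := rfl; have e1 : fibF (0+1) = 2 := rfl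
    have e2 : fibF (0-1) = 1 := rfl; have e3 : fibF 1 = 2 := rfl
    omega
  | succ m =>
    have h3 : fibF (m+1+1) = fibF (m+1) + fibF m := rfl
    simp only [Nat.succ_sub_one]
    omega

lemma greedy_rem_lt {N : ℕ} (h : N ≠ 0) :
    N - fibF (Nat.findGreatest (fun j => fibF j ≤ N) N)
      < fibF (Nat.findGreatest (fun j => fibF j ≤ N) N - 1) :=
  fib_rem_lt (greedy_le h) (greedy_lt_succ h)

lemma zeck_eq_zero_of_fib_gt : ∀ N, ∀ i, N < fibF i → zeck N i = 0 := by
  intro N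
  induction N using Nat.strong_induction_on with
  | _ N ih =>
    intro i hi
    rcases eq_or_ne N 0 with rfl | h
    · exact zeck_zero i
    · have h1 : fibF (Nat.findGreatest (fun j => fibF j ≤ N) N) ≤ N := greedy_le h
      have hik : i ≠ Nat.findGreatest (fun j => fibF j ≤ N) N := by
        intro he; rw [← he] at h1; omega
      rw [zeck_off_top h hik]
      exact ih _ (Nat.sub_lt (Nat.pos_of_ne_zero h) (fibF_pos _)) i
        (lt_of_le_of_lt (Nat.sub_le _ _) hi)

lemma zeck_le_one : ∀ N i, zeck N i ≤ 1 := by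
  intro N
  induction N using Nat.strong_induction_on with
  | _ N ih =>
    intro i
    rcases eq_or_ne N 0 with rfl | h
    · simp [zeck_zero]
    · rcases eq_or_ne i (Nat.findGreatest (fun j => fibF j ≤ N) N) with he | he
      · rw [he, zeck_top h]
      · rw [zeck_off_top h he]
        exact ih _ (Nat.sub_lt (Nat.pos_of_ne_zero h) (fibF_pos _)) i

lemma zeck_noconsec : ∀ N i, zeck N (i+1) = 1 → zeck N i = 0 := by
  intro N
  induction N using Nat.strong_induction_on with
  | _ N ih =>
    intro i hi
    rcases eq_or_ne N 0 with rfl | h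
    · exact zeck_zero i
    · have h1 : fibF (Nat.findGreatest (fun j => fibF j ≤ N) N) ≤ N := greedy_le h
      have hrem := greedy_rem_lt h
      have hNlt := Nat.sub_lt (Nat.pos_of_ne_zero h) (fibF_pos (Nat.findGreatest (fun j => fibF j ≤ N) N))
      rcases eq_or_ne (i+1) (Nat.findGreatest (fun j => fibF j ≤ N) N) with he | he
      · rw [zeck_off_top h (by omega)]
        refine zeck_eq_zero_of_fib_gt _ i ?_
        have : i = Nat.findGreatest (fun j => fibF j ≤ N) N - 1 := by omega
        rw [this]
        exact hrem
      · rw [zeck_off_top h he] at hi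
        rcases eq_or_ne i (Nat.findGreatest (fun j => fibF j ≤ N) N) with hik | hik
        · have hlt : N - fibF (Nat.findGreatest (fun j => fibF j ≤ N) N) < fibF (i+1) :=
            lt_of_lt_of_le hrem (fibF_mono (by omega))
          rw [zeck_eq_zero_of_fib_gt _ _ hlt] at hi
          omega
        · rw [zeck_off_top h hik]
          exact ih _ hNlt i hi

lemma zeck_sum : ∀ N, ∑ i ∈ Finset.range (N+1), zeck N i * fibF i = N := by
  intro N
  induction N using Nat.strong_induction_on with
  | _ N ih =>
    rcases eq_or_ne N 0 with rfl | h
    · simp [zeck_zero]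
    · set k := Nat.findGreatest (fun j => fibF j ≤ N) N with hk
      have h1 : fibF k ≤ N := greedy_le h
      have hrem := greedy_rem_lt h
      rw [← hk] at hrem
      have hkF := fibF_ge k
      have hkN : k < N := by omega
      set M := N - fibF k with hM
      have hMN : M < N := Nat.sub_lt (Nat.pos_of_ne_zero h) (fibF_pos k)
      have hMk : M < fibF k := lt_of_lt_of_le hrem (fibF_mono (by omega))
      have hzk : zeck M k = 0 := zeck_eq_zero_of_fib_gt M k hMk
      have hstep : ∀ i ∈ Finset.range (N+1),
          zeck N i * fibF i = (if i = k then fibF k else 0) + zeck M i * fibF i := by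
        intro i _
        rcases eq_or_ne i k with rfl | hik
        · have hz1 : zeck N k = 1 := zeck_top h
          simp [hz1, hzk]
        · have hz2 : zeck N i = zeck M i := zeck_off_top h hik
          simp [hik, hz2]
      rw [Finset.sum_congr rfl hstep, Finset.sum_add_distrib,
        Finset.sum_ite_eq' (Finset.range (N+1)) k (fun _ => fibF k)]
      have hsub : ∑ i ∈ Finset.range (N+1), zeck M i * fibF i
          = ∑ i ∈ Finset.range (M+1), zeck M i * fibF i := by
        refine (Finset.sum_subset ?_ ?_).symm
        · exact Finset.range_subset_range.2 (by omega)
        · intro x _ hx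
          rw [zeck_eq_zero_of_lt M x (by simp at hx; omega)]
          ring
      rw [hsub, ih M hMN]
      rw [if_pos (Finset.mem_range.2 (by omega))]
      omega

lemma zeck_sum' {N K : ℕ} (h : N < K) :
    ∑ i ∈ Finset.range K, zeck N i * fibF i = N := by
  have e : ∑ i ∈ Finset.range K, zeck N i * fibF i
      = ∑ i ∈ Finset.range (N+1), zeck N i * fibF i := by
    refine (Finset.sum_subset
      (show Finset.range (N+1) ⊆ Finset.range K from Finset.range_subset_range.2 (by omega)) ?_).symm
    intro x _ hx
    rw [zeck_eq_zero_of_lt N x (by simp at hx; omega)]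
    ring
  rw [e, zeck_sum N]

lemma valid_sum_lt (ε : ℕ → ℕ) (h1 : ∀ i, ε i ≤ 1) (h2 : ∀ i, ε (i+1) = 1 → ε i = 0) :
    ∀ k, ∑ i ∈ Finset.range k, ε i * fibF i < fibF k := by
  intro k
  induction k using Nat.strong_induction_on with
  | _ k ih =>
    match k with
    | 0 => simp [fibF]
    | 1 =>
      have h0 := h1 0
      have hf0 : fibF 0 = 1 := rfl
      have hf1 : fibF 1 = 2 := rfl
      simp only [Finset.sum_range_one, hf0, hf1]
      omega
    | (k+2) =>
      have hf : fibF (k+2) = fibF (k+1) + fibF k := rfl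
      rcases Nat.le_one_iff_eq_zero_or_eq_one.1 (h1 (k+1)) with he | he
      · have hlt := ih (k+1) (by omega)
        rw [Finset.sum_range_succ, he]
        have := fibF_succ_lt (k+1)
        omega
      · have hek : ε k = 0 := h2 k he
        have hlt := ih k (by omega)
        rw [Finset.sum_range_succ, Finset.sum_range_succ, he, hek]
        omega

lemma zeck_unique : ∀ N (ε : ℕ → ℕ) (K : ℕ), (∀ i, ε i ≤ 1) →
    (∀ i, ε (i+1) = 1 → ε i = 0) → (∀ i, K ≤ i → ε i = 0) →
    (∑ i ∈ Finset.range K, ε i * fibF i = N) → ∀ i, zeck N i = ε i := by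
  intro N
  induction N using Nat.strong_induction_on with
  | _ N ih =>
    intro ε K h1 h2 hK hsum i
    rcases eq_or_ne N 0 with rfl | h
    · rw [zeck_zero]
      rcases lt_or_ge i K with hi | hi
      · have h0 := Finset.sum_eq_zero_iff.1 hsum i (Finset.mem_range.2 hi)
        rcases Nat.mul_eq_zero.1 h0 with h0' | h0'
        · omega
        · have := fibF_pos i; omega
      · exact (hK i hi).symm
    · set k := Nat.findGreatest (fun j => fibF j ≤ N) N with hk
      have hkle : fibF k ≤ N := greedy_le h
      have hklt : N < fibF (k+1) := greedy_lt_succ h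
      have hex : ∃ j, j ≤ K ∧ ε j = 1 := by
        by_contra hc
        push_neg at hc
        have hz : ∀ i ∈ Finset.range K, ε i * fibF i = 0 := by
          intro i hi
          have hi' : i ≤ K := (Finset.mem_range.1 hi).le
          have h1' := h1 i
          have h2' := hc i hi'
          have : ε i = 0 := by omega
          rw [this]; ring
        rw [Finset.sum_eq_zero hz] at hsum
        exact h hsum.symm
      obtain ⟨j0, hj0K, hj0⟩ := hex
      set j := Nat.findGreatest (fun i => ε i = 1) K with hj
      have hεj : ε j = 1 := Nat.findGreatest_spec (P := fun i => ε i = 1) hj0K hj0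
      have hjK : j < K := by
        by_contra hc
        push_neg at hc
        have := hK j hc
        omega
      have htail : ∀ i, j < i → ε i = 0 := by
        intro i hi
        rcases lt_or_ge i K with hiK | hiK
        · have hng := Nat.findGreatest_is_greatest (P := fun i => ε i = 1) (n := K)
            (k := i) hi hiK.le
          have := h1 i
          omega
        · exact hK i hiK
      have hsum2 : ∑ x ∈ Finset.range (j+1), ε x * fibF x = N := by
        rw [← hsum]
        refine Finset.sum_subset
          (show Finset.range (j+1) ⊆ Finset.range K from Finset.range_subset_range.2 (by omega)) ?_
        intro x _ hx
        rw [htail x (by simp at hx; omega)]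
        ring
      have hjle : fibF j ≤ N := by
        calc fibF j = ε j * fibF j := by rw [hεj]; ring
        _ ≤ _ := hsum2 ▸ Finset.single_le_sum (f := fun i => ε i * fibF i)
            (fun _ _ => Nat.zero_le _) (Finset.self_mem_range_succ j)
      have hjlt : N < fibF (j+1) := hsum2 ▸ valid_sum_lt ε h1 h2 (j+1)
      have hjk : j = k := by
        rcases lt_trichotomy j k with hlt | he | hgt
        · have := fibF_mono (show j+1 ≤ k by omega)
          omega
        · exact he
        · have := fibF_mono (show k+1 ≤ j by omega)
          omega
      set ε' := Function.update ε k 0 with hε'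
      have hε'k : ε' k = 0 := Function.update_self k 0 ε
      have hε'ne : ∀ i, i ≠ k → ε' i = ε i := fun i hi => Function.update_of_ne hi 0 ε
      have hεk : ε k = 1 := hjk ▸ hεj
      have hkK : k < K := hjk ▸ hjK
      have hsum' : ∑ x ∈ Finset.range K, ε' x * fibF x = N - fibF k := by
        have hmem : k ∈ Finset.range K := Finset.mem_range.2 hkK
        have e1 := Finset.sum_erase_add (Finset.range K) (fun x => ε x * fibF x) hmem
        have e2 := Finset.sum_erase_add (Finset.range K) (fun x => ε' x * fibF x) hmem
        have e3 : ∑ x ∈ (Finset.range K).erase k, ε' x * fibF x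
            = ∑ x ∈ (Finset.range K).erase k, ε x * fibF x := by
          refine Finset.sum_congr rfl fun x hx => ?_
          rw [hε'ne x (Finset.ne_of_mem_erase hx)]
        simp only [hεk, hε'k, one_mul, zero_mul, add_zero] at e1 e2
        rw [hsum] at e1
        rw [e3] at e2
        omega
      have hrec := ih (N - fibF k) (Nat.sub_lt (Nat.pos_of_ne_zero h) (fibF_pos k)) ε' K
        (fun i => by rcases eq_or_ne i k with rfl | hi
                     · rw [hε'k]; omega
                     · rw [hε'ne i hi]; exact h1 i)
        (fun i hi => by
          rcases eq_or_ne (i+1) k with he | he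
          · rw [he, hε'k] at hi; omega
          · rw [hε'ne _ he] at hi
            rcases eq_or_ne i k with rfl | hi'
            · exact hε'k
            · rw [hε'ne i hi']; exact h2 i hi)
        (fun i hi => by rw [hε'ne i (by omega)]; exact hK i hi)
        hsum'
      rcases eq_or_ne i k with rfl | hik
      · rw [zeck_top h, hεk]
      · rw [zeck_off_top h hik, hrec i, hε'ne i hik]

end ZeckBasic
section Patterns

lemma fibF_add_two (n : ℕ) : fibF (n+2) = fibF (n+1) + fibF n := rfl

lemma fib_odd_sum : ∀ {m s : ℕ}, m ≤ s →
    ∑ j ∈ Finset.Ico m s, fibF (2*j+1) + fibF (2*m) = fibF (2*s) := by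
  intro m s h
  induction s, h using Nat.le_induction with
  | base => simp
  | succ s hms ih =>
    rw [Finset.sum_Ico_succ_top hms]
    have e1 : 2*(s+1) = 2*s+2 := by ring
    rw [e1, fibF_add_two (2*s)]
    omega

lemma fib_even_sum : ∀ {m s : ℕ}, m ≤ s →
    ∑ j ∈ Finset.Icc m s, fibF (2*j) + fibF (2*m-1) = fibF (2*s+1) := by
  intro m s h
  induction s, h using Nat.le_induction with
  | base =>
    rw [Finset.Icc_self, Finset.sum_singleton]
    match m with
    | 0 => norm_num [fibF]
    | (t+1) =>
      have key : ∀ a b c : ℕ, b + 2 = a → b + 1 = c → fibF c + fibF b = fibF a := by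
        rintro a b c rfl rfl
        exact (fibF_add_two b).symm
      exact key (2*(t+1)+1) (2*(t+1)-1) (2*(t+1)) (by omega) (by omega)
  | succ s hms ih =>
    rw [Finset.sum_Icc_succ_top (by omega)]
    have e1 : fibF (2*(s+1)+1) = fibF (2*(s+1)) + fibF (2*s+1) := by
      rw [show 2*(s+1)+1 = (2*s+1)+2 by ring, fibF_add_two (2*s+1)]
      congr 2 <;> omega
    have e2 : fibF (2*(s+1)) = fibF (2*s+1) + fibF (2*s) := by
      rw [show 2*(s+1) = 2*s+2 by ring]
      exact fibF_add_two (2*s)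
    omega

lemma fib_even_sum' {m s : ℕ} (h : m ≤ s + 1) :
    ∑ j ∈ Finset.Icc m s, fibF (2*j) + fibF (2*m-1) = fibF (2*s+1) := by
  rcases Nat.lt_or_ge m (s+1) with h' | h'
  · exact fib_even_sum (by omega)
  · have hm : m = s + 1 := by omega
    subst hm
    rw [Finset.Icc_eq_empty (by omega), Finset.sum_empty]
    have : 2*(s+1)-1 = 2*s+1 := by omega
    rw [this]
    omega

lemma filter_odd_eq (m s L : ℕ) (hL : 2*s ≤ L) :
    (Finset.range L).filter (fun i => i % 2 = 1 ∧ 2*m+1 ≤ i ∧ i < 2*s)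
      = (Finset.Ico m s).image (fun j => 2*j+1) := by
  ext i
  simp only [Finset.mem_filter, Finset.mem_range, Finset.mem_image, Finset.mem_Ico]
  constructor
  · rintro ⟨hL', h1, h2, h3⟩
    exact ⟨i/2, ⟨by omega, by omega⟩, by omega⟩
  · rintro ⟨j, ⟨hj1, hj2⟩, rfl⟩
    omega

lemma filter_even_eq (m s L : ℕ) (hL : 2*s+1 ≤ L) :
    (Finset.range L).filter (fun i => i % 2 = 0 ∧ 2*m ≤ i ∧ i ≤ 2*s)
      = (Finset.Icc m s).image (fun j => 2*j) := by
  ext i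
  simp only [Finset.mem_filter, Finset.mem_range, Finset.mem_image, Finset.mem_Icc]
  constructor
  · rintro ⟨hL', h1, h2, h3⟩
    exact ⟨i/2, ⟨by omega, by omega⟩, by omega⟩
  · rintro ⟨j, ⟨hj1, hj2⟩, rfl⟩
    omega

lemma sum_indic_odd (m s L : ℕ) (hL : 2*s ≤ L) (f : ℕ → ℕ) :
    ∑ i ∈ Finset.range L, (if i % 2 = 1 ∧ 2*m+1 ≤ i ∧ i < 2*s then 1 else 0) * f i
      = ∑ j ∈ Finset.Ico m s, f (2*j+1) := by
  have e1 : ∀ i, (if i % 2 = 1 ∧ 2*m+1 ≤ i ∧ i < 2*s then 1 else 0) * f i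
      = if i % 2 = 1 ∧ 2*m+1 ≤ i ∧ i < 2*s then f i else 0 := by
    intro i; split_ifs <;> ring
  simp only [e1]
  rw [← Finset.sum_filter, filter_odd_eq m s L hL, Finset.sum_image]
  intro a _ b _ h
  simp only at h
  omega

lemma sum_indic_even (m s L : ℕ) (hL : 2*s+1 ≤ L) (f : ℕ → ℕ) :
    ∑ i ∈ Finset.range L, (if i % 2 = 0 ∧ 2*m ≤ i ∧ i ≤ 2*s then 1 else 0) * f i
      = ∑ j ∈ Finset.Icc m s, f (2*j) := by
  have e1 : ∀ i, (if i % 2 = 0 ∧ 2*m ≤ i ∧ i ≤ 2*s then 1 else 0) * f i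
      = if i % 2 = 0 ∧ 2*m ≤ i ∧ i ≤ 2*s then f i else 0 := by
    intro i; split_ifs <;> ring
  simp only [e1]
  rw [← Finset.sum_filter, filter_even_eq m s L hL, Finset.sum_image]
  intro a _ b _ h
  simp only at h
  omega

lemma prod_indic_odd (m s L : ℕ) (hL : 2*s ≤ L) (f : ℕ → ℂ) :
    ∏ i ∈ Finset.range L, f i ^ (if i % 2 = 1 ∧ 2*m+1 ≤ i ∧ i < 2*s then 1 else 0)
      = ∏ j ∈ Finset.Ico m s, f (2*j+1) := by
  have e1 : ∀ i, f i ^ (if i % 2 = 1 ∧ 2*m+1 ≤ i ∧ i < 2*s then 1 else 0)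
      = if i % 2 = 1 ∧ 2*m+1 ≤ i ∧ i < 2*s then f i else 1 := by
    intro i; split_ifs <;> simp
  simp only [e1]
  rw [← Finset.prod_filter, filter_odd_eq m s L hL, Finset.prod_image]
  intro a _ b _ h
  simp only at h
  omega

lemma prod_indic_even (m s L : ℕ) (hL : 2*s+1 ≤ L) (f : ℕ → ℂ) :
    ∏ i ∈ Finset.range L, f i ^ (if i % 2 = 0 ∧ 2*m ≤ i ∧ i ≤ 2*s then 1 else 0)
      = ∏ j ∈ Finset.Icc m s, f (2*j) := by
  have e1 : ∀ i, f i ^ (if i % 2 = 0 ∧ 2*m ≤ i ∧ i ≤ 2*s then 1 else 0)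
      = if i % 2 = 0 ∧ 2*m ≤ i ∧ i ≤ 2*s then f i else 1 := by
    intro i; split_ifs <;> simp
  simp only [e1]
  rw [← Finset.prod_filter, filter_even_eq m s L hL, Finset.prod_image]
  intro a _ b _ h
  simp only at h
  omega

lemma zeck_one_le {N i : ℕ} (h : zeck N i = 1) : fibF i ≤ N := by
  by_contra hc
  push_neg at hc
  rw [zeck_eq_zero_of_fib_gt N i hc] at h
  omega

lemma even_pattern {N : ℕ} (h0 : zeck N 0 = 0) :
    ∀ i < 2 * carryLen N + 2,
      zeck N i = if i % 2 = 1 ∧ 2*0+1 ≤ i ∧ i < 2 * carryLen N then 1 else 0 := by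
  have hcl : carryLen N = Nat.find (exists_break0 N) := by rw [carryLen, if_pos h0]
  have hbreak : ¬(zeck N (2 * carryLen N + 1) = 1 ∧ zeck N (2 * carryLen N) = 0) := by
    rw [hcl]; exact Nat.find_spec (exists_break0 N)
  have hmin : ∀ j < carryLen N, zeck N (2*j+1) = 1 ∧ zeck N (2*j) = 0 := by
    intro j hj
    have := Nat.find_min (exists_break0 N) (hcl ▸ hj)
    exact not_not.1 this
  set s := carryLen N with hs
  clear_value s
  have hz2s : zeck N (2*s) = 0 := by
    rcases Nat.eq_zero_or_pos s with h | h
    · rw [h]; simpa using h0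
    · obtain ⟨t, rfl⟩ : ∃ t, s = t+1 := ⟨s-1, by omega⟩
      have h1 : zeck N (2*t+1) = 1 := (hmin t (by omega)).1
      have hle := zeck_le_one N (2*(t+1))
      by_contra hne
      have h2 : zeck N (2*(t+1)) = 1 := by omega
      have e : 2*(t+1) = (2*t+1) + 1 := by ring
      rw [e] at h2
      have := zeck_noconsec N (2*t+1) h2
      omega
  have hz2s1 : zeck N (2*s+1) = 0 := by
    have hle := zeck_le_one N (2*s+1)
    have hne : ¬(zeck N (2*s+1) = 1) := fun h => hbreak ⟨h, hz2s⟩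
    omega
  intro i hi
  by_cases hodd : i % 2 = 1
  · by_cases hlt : i < 2*s
    · have h1 : zeck N (2*(i/2)+1) = 1 := (hmin (i/2) (by omega)).1
      have e : 2*(i/2)+1 = i := by omega
      rw [e] at h1
      rw [if_pos ⟨hodd, by omega, hlt⟩]
      exact h1
    · have he : i = 2*s+1 := by omega
      rw [he, if_neg (by rintro ⟨-, -, h⟩; omega)]
      exact hz2s1
  · rw [if_neg (by rintro ⟨h, -, -⟩; omega)]
    by_cases hlt : i < 2*s
    · rcases Nat.eq_zero_or_pos i with rfl | hpos
      · exact h0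
      · have h1 : zeck N (2*(i/2)) = 0 := (hmin (i/2) (by omega)).2
        have e : 2*(i/2) = i := by omega
        rw [e] at h1
        exact h1
    · have he : i = 2*s := by omega
      rw [he]
      exact hz2s

lemma odd_pattern {N : ℕ} (h0 : zeck N 0 = 1) :
    ∀ i < 2 * carryLen N + 3,
      zeck N i = if i % 2 = 0 ∧ 2*0 ≤ i ∧ i ≤ 2 * carryLen N then 1 else 0 := by
  have h0' : ¬ (zeck N 0 = 0) := by omega
  have hcl : carryLen N = Nat.find (exists_break1 N) := by rw [carryLen, if_neg h0']
  have hbreak : ¬(zeck N (2 * carryLen N + 2) = 1 ∧ zeck N (2 * carryLen N + 1) = 0) := by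
    rw [hcl]; exact Nat.find_spec (exists_break1 N)
  have hmin : ∀ j < carryLen N, zeck N (2*j+2) = 1 ∧ zeck N (2*j+1) = 0 := by
    intro j hj
    have := Nat.find_min (exists_break1 N) (hcl ▸ hj)
    exact not_not.1 this
  set s := carryLen N with hs
  have heven : ∀ j ≤ s, zeck N (2*j) = 1 := by
    intro j hj
    rcases Nat.eq_zero_or_pos j with rfl | hpos
    · exact h0
    · have := (hmin (j-1) (by omega)).1
      have e : 2*(j-1)+2 = 2*j := by omega
      rw [e] at this
      exact this
  have hz2s1 : zeck N (2*s+1) = 0 := by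
    have h1 : zeck N (2*s) = 1 := heven s le_rfl
    have hle := zeck_le_one N (2*s+1)
    by_contra hne
    have h2 : zeck N (2*s+1) = 1 := by omega
    have := zeck_noconsec N (2*s) h2
    omega
  have hz2s2 : zeck N (2*s+2) = 0 := by
    have hle := zeck_le_one N (2*s+2)
    have hne : ¬(zeck N (2*s+2) = 1) := fun h => hbreak ⟨h, hz2s1⟩
    omega
  intro i hi
  by_cases heven' : i % 2 = 0
  · by_cases hle : i ≤ 2*s
    · have h1 : zeck N (2*(i/2)) = 1 := heven (i/2) (by omega)
      have e : 2*(i/2) = i := by omega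
      rw [e] at h1
      rw [if_pos ⟨heven', by omega, hle⟩]
      exact h1
    · have he : i = 2*s+2 := by omega
      rw [he, if_neg (by rintro ⟨-, -, h⟩; omega)]
      exact hz2s2
  · rw [if_neg (by rintro ⟨h, -, -⟩; omega)]
    by_cases hlt : i < 2*s
    · have h1 : zeck N (2*(i/2)+1) = 0 := (hmin (i/2) (by omega)).2
      have e : 2*(i/2)+1 = i := by omega
      rw [e] at h1
      exact h1
    · have he : i = 2*s+1 := by omega
      rw [he]
      exact hz2s1

lemma even_two_s_le {N : ℕ} (h0 : zeck N 0 = 0) : 2 * carryLen N ≤ N := by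
  rcases Nat.eq_zero_or_pos (carryLen N) with h | h
  · omega
  · have h1 : zeck N (2*(carryLen N) - 1) = 1 := by
      have := even_pattern h0 (2*(carryLen N) - 1) (by omega)
      rw [if_pos ⟨by omega, by omega, by omega⟩] at this
      exact this
    have h2 := zeck_one_le h1
    have h3 := fibF_ge (2*(carryLen N) - 1)
    omega

lemma odd_two_s_lt {N : ℕ} (h0 : zeck N 0 = 1) : 2 * carryLen N + 1 ≤ N := by
  have h1 : zeck N (2*(carryLen N)) = 1 := by
    have := odd_pattern h0 (2*(carryLen N)) (by omega)
    rw [if_pos ⟨by omega, by omega, by omega⟩] at this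
    exact this
  have h2 := zeck_one_le h1
  have h3 := fibF_ge (2*(carryLen N))
  omega

end Patterns
section Transfer

lemma even_zeck_sub {N m : ℕ} (h0 : zeck N 0 = 0) (hms : m ≤ carryLen N) :
    ∀ i, zeck (N + 1 - fibF (2*m)) i
      = if i < 2*(carryLen N)+2 then
          (if i % 2 = 1 ∧ 2*m+1 ≤ i ∧ i < 2*(carryLen N) then 1 else 0)
        else zeck N i := by
  have hpat := even_pattern h0
  have h2s := even_two_s_le h0
  set s := carryLen N with hs
  clear_value s
  have hle1 : ∀ i, (if i < 2*s+2 then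
      (if i % 2 = 1 ∧ 2*m+1 ≤ i ∧ i < 2*s then 1 else 0) else zeck N i) ≤ 1 := by
    intro i; split_ifs <;> simp [zeck_le_one]
  have hnc : ∀ i, (if i+1 < 2*s+2 then
      (if (i+1) % 2 = 1 ∧ 2*m+1 ≤ i+1 ∧ i+1 < 2*s then 1 else 0) else zeck N (i+1)) = 1 →
      (if i < 2*s+2 then
      (if i % 2 = 1 ∧ 2*m+1 ≤ i ∧ i < 2*s then 1 else 0) else zeck N i) = 0 := by
    intro i hi
    by_cases c1 : i + 1 < 2*s+2
    · rw [if_pos c1] at hi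
      by_cases c2 : (i+1) % 2 = 1 ∧ 2*m+1 ≤ i+1 ∧ i+1 < 2*s
      · obtain ⟨a1, a2, a3⟩ := c2
        rw [if_pos (show i < 2*s+2 by omega), if_neg (by rintro ⟨b1, -, -⟩; omega)]
      · rw [if_neg c2] at hi; omega
    · rw [if_neg c1] at hi
      by_cases c3 : i < 2*s+2
      · rw [if_pos c3, if_neg (by rintro ⟨-, -, b3⟩; omega)]
      · rw [if_neg c3]
        exact zeck_noconsec N i hi
  have htail : ∀ i, N+2 ≤ i → (if i < 2*s+2 then
      (if i % 2 = 1 ∧ 2*m+1 ≤ i ∧ i < 2*s then 1 else 0) else zeck N i) = 0 := by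
    intro i hi
    rw [if_neg (by omega)]
    exact zeck_eq_zero_of_lt N i (by omega)
  -- sums
  have hNsum : ∑ i ∈ Finset.range (N+2), zeck N i * fibF i = N := zeck_sum' (by omega)
  have hsplitN : ∑ i ∈ Finset.range (N+2), zeck N i * fibF i
      = ∑ i ∈ Finset.range (2*s+2), zeck N i * fibF i
        + ∑ i ∈ Finset.Ico (2*s+2) (N+2), zeck N i * fibF i := by
    simp only [Finset.range_eq_Ico]
    exact (Finset.sum_Ico_consecutive _ (by omega) (by omega)).symm
  have hlow0 : ∑ i ∈ Finset.range (2*s+2), zeck N i * fibF i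
      = ∑ j ∈ Finset.Ico 0 s, fibF (2*j+1) := by
    rw [Finset.sum_congr rfl (fun i hi => by rw [hpat i (Finset.mem_range.1 hi)])]
    exact sum_indic_odd 0 s (2*s+2) (by omega) fibF
  have hsplitδ : ∑ i ∈ Finset.range (N+2), (if i < 2*s+2 then
        (if i % 2 = 1 ∧ 2*m+1 ≤ i ∧ i < 2*s then 1 else 0) else zeck N i) * fibF i
      = ∑ i ∈ Finset.range (2*s+2), (if i < 2*s+2 then
        (if i % 2 = 1 ∧ 2*m+1 ≤ i ∧ i < 2*s then 1 else 0) else zeck N i) * fibF i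
        + ∑ i ∈ Finset.Ico (2*s+2) (N+2), (if i < 2*s+2 then
        (if i % 2 = 1 ∧ 2*m+1 ≤ i ∧ i < 2*s then 1 else 0) else zeck N i) * fibF i := by
    simp only [Finset.range_eq_Ico]
    exact (Finset.sum_Ico_consecutive _ (by omega) (by omega)).symm
  have hlowm : ∑ i ∈ Finset.range (2*s+2), (if i < 2*s+2 then
        (if i % 2 = 1 ∧ 2*m+1 ≤ i ∧ i < 2*s then 1 else 0) else zeck N i) * fibF i
      = ∑ j ∈ Finset.Ico m s, fibF (2*j+1) := by
    rw [Finset.sum_congr rfl (fun i hi => by rw [if_pos (Finset.mem_range.1 hi)])]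
    exact sum_indic_odd m s (2*s+2) (by omega) fibF
  have hhighδ : ∑ i ∈ Finset.Ico (2*s+2) (N+2), (if i < 2*s+2 then
        (if i % 2 = 1 ∧ 2*m+1 ≤ i ∧ i < 2*s then 1 else 0) else zeck N i) * fibF i
      = ∑ i ∈ Finset.Ico (2*s+2) (N+2), zeck N i * fibF i := by
    refine Finset.sum_congr rfl (fun i hi => ?_)
    rw [if_neg (by have := (Finset.mem_Ico.1 hi).1; omega)]
  have hf0 : fibF (2*0) = 1 := by norm_num [fibF]
  have i1 := fib_odd_sum (show (0:ℕ) ≤ s by omega)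
  have i2 := fib_odd_sum hms
  have hδsum : ∑ i ∈ Finset.range (N+2), (if i < 2*s+2 then
        (if i % 2 = 1 ∧ 2*m+1 ≤ i ∧ i < 2*s then 1 else 0) else zeck N i) * fibF i
      = N + 1 - fibF (2*m) := by
    rw [hsplitδ, hlowm, hhighδ]
    omega
  exact zeck_unique (N + 1 - fibF (2*m)) _ (N+2) hle1 hnc htail hδsum

lemma even_zeck_succ {N : ℕ} (h0 : zeck N 0 = 0) :
    ∀ i, zeck (N + 1) i
      = if i = 2*(carryLen N) then 1 else if i < 2*(carryLen N)+2 then 0 else zeck N i := by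
  have hpat := even_pattern h0
  have h2s := even_two_s_le h0
  set s := carryLen N with hs
  clear_value s
  have hle1 : ∀ i, (if i = 2*s then 1 else if i < 2*s+2 then 0 else zeck N i) ≤ 1 := by
    intro i; split_ifs <;> simp [zeck_le_one]
  have hnc : ∀ i, (if i+1 = 2*s then 1 else if i+1 < 2*s+2 then 0 else zeck N (i+1)) = 1 →
      (if i = 2*s then 1 else if i < 2*s+2 then 0 else zeck N i) = 0 := by
    intro i hi
    by_cases c1 : i + 1 = 2*s
    · rw [if_neg (by omega), if_pos (by omega)]
    · rw [if_neg c1] at hi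
      by_cases c2 : i + 1 < 2*s+2
      · rw [if_pos c2] at hi; omega
      · rw [if_neg c2] at hi
        by_cases c3 : i < 2*s+2
        · rw [if_neg (by omega), if_pos c3]
        · rw [if_neg (by omega), if_neg c3]
          exact zeck_noconsec N i hi
  have htail : ∀ i, N+2 ≤ i →
      (if i = 2*s then 1 else if i < 2*s+2 then 0 else zeck N i) = 0 := by
    intro i hi
    rw [if_neg (by omega), if_neg (by omega)]
    exact zeck_eq_zero_of_lt N i (by omega)
  have hNsum : ∑ i ∈ Finset.range (N+2), zeck N i * fibF i = N := zeck_sum' (by omega)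
  have hsplitN : ∑ i ∈ Finset.range (N+2), zeck N i * fibF i
      = ∑ i ∈ Finset.range (2*s+2), zeck N i * fibF i
        + ∑ i ∈ Finset.Ico (2*s+2) (N+2), zeck N i * fibF i := by
    simp only [Finset.range_eq_Ico]
    exact (Finset.sum_Ico_consecutive _ (by omega) (by omega)).symm
  have hlow0 : ∑ i ∈ Finset.range (2*s+2), zeck N i * fibF i
      = ∑ j ∈ Finset.Ico 0 s, fibF (2*j+1) := by
    rw [Finset.sum_congr rfl (fun i hi => by rw [hpat i (Finset.mem_range.1 hi)])]
    exact sum_indic_odd 0 s (2*s+2) (by omega) fibF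
  have hsplitδ : ∑ i ∈ Finset.range (N+2),
        (if i = 2*s then 1 else if i < 2*s+2 then 0 else zeck N i) * fibF i
      = ∑ i ∈ Finset.range (2*s+2),
        (if i = 2*s then 1 else if i < 2*s+2 then 0 else zeck N i) * fibF i
        + ∑ i ∈ Finset.Ico (2*s+2) (N+2),
        (if i = 2*s then 1 else if i < 2*s+2 then 0 else zeck N i) * fibF i := by
    simp only [Finset.range_eq_Ico]
    exact (Finset.sum_Ico_consecutive _ (by omega) (by omega)).symm
  have hlowδ : ∑ i ∈ Finset.range (2*s+2),
        (if i = 2*s then 1 else if i < 2*s+2 then 0 else zeck N i) * fibF i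
      = fibF (2*s) := by
    have hc : ∀ i ∈ Finset.range (2*s+2),
        (if i = 2*s then 1 else if i < 2*s+2 then 0 else zeck N i) * fibF i
        = if i = 2*s then fibF (2*s) else 0 := by
      intro i hi
      rcases eq_or_ne i (2*s) with rfl | hne
      · simp
      · rw [if_neg hne, if_neg hne, if_pos (Finset.mem_range.1 hi)]
        ring
    rw [Finset.sum_congr rfl hc,
      Finset.sum_ite_eq' (Finset.range (2*s+2)) (2*s) (fun _ => fibF (2*s)),
      if_pos (Finset.mem_range.2 (by omega))]
  have hhighδ : ∑ i ∈ Finset.Ico (2*s+2) (N+2),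
        (if i = 2*s then 1 else if i < 2*s+2 then 0 else zeck N i) * fibF i
      = ∑ i ∈ Finset.Ico (2*s+2) (N+2), zeck N i * fibF i := by
    refine Finset.sum_congr rfl (fun i hi => ?_)
    have := (Finset.mem_Ico.1 hi).1
    rw [if_neg (by omega), if_neg (by omega)]
  have hf0 : fibF (2*0) = 1 := by norm_num [fibF]
  have i1 := fib_odd_sum (show (0:ℕ) ≤ s by omega)
  have hδsum : ∑ i ∈ Finset.range (N+2),
        (if i = 2*s then 1 else if i < 2*s+2 then 0 else zeck N i) * fibF i = N + 1 := by
    rw [hsplitδ, hlowδ, hhighδ]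
    omega
  exact zeck_unique (N + 1) _ (N+2) hle1 hnc htail hδsum

lemma odd_zeck_sub {N m : ℕ} (h0 : zeck N 0 = 1) (hms : m ≤ carryLen N + 1) (hm1 : 1 ≤ m) :
    ∀ i, zeck (N + 1 - fibF (2*m-1)) i
      = if i < 2*(carryLen N)+3 then
          (if i % 2 = 0 ∧ 2*m ≤ i ∧ i ≤ 2*(carryLen N) then 1 else 0)
        else zeck N i := by
  have hpat := odd_pattern h0
  have h2s := odd_two_s_lt h0
  set s := carryLen N with hs
  clear_value s
  have hle1 : ∀ i, (if i < 2*s+3 then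
      (if i % 2 = 0 ∧ 2*m ≤ i ∧ i ≤ 2*s then 1 else 0) else zeck N i) ≤ 1 := by
    intro i; split_ifs <;> simp [zeck_le_one]
  have hnc : ∀ i, (if i+1 < 2*s+3 then
      (if (i+1) % 2 = 0 ∧ 2*m ≤ i+1 ∧ i+1 ≤ 2*s then 1 else 0) else zeck N (i+1)) = 1 →
      (if i < 2*s+3 then
      (if i % 2 = 0 ∧ 2*m ≤ i ∧ i ≤ 2*s then 1 else 0) else zeck N i) = 0 := by
    intro i hi
    by_cases c1 : i + 1 < 2*s+3
    · rw [if_pos c1] at hi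
      by_cases c2 : (i+1) % 2 = 0 ∧ 2*m ≤ i+1 ∧ i+1 ≤ 2*s
      · obtain ⟨a1, a2, a3⟩ := c2
        rw [if_pos (show i < 2*s+3 by omega), if_neg (by rintro ⟨b1, -, -⟩; omega)]
      · rw [if_neg c2] at hi; omega
    · rw [if_neg c1] at hi
      by_cases c3 : i < 2*s+3
      · rw [if_pos c3, if_neg (by rintro ⟨-, -, b3⟩; omega)]
      · rw [if_neg c3]
        exact zeck_noconsec N i hi
  have htail : ∀ i, N+2 ≤ i → (if i < 2*s+3 then
      (if i % 2 = 0 ∧ 2*m ≤ i ∧ i ≤ 2*s then 1 else 0) else zeck N i) = 0 := by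
    intro i hi
    rw [if_neg (by omega)]
    exact zeck_eq_zero_of_lt N i (by omega)
  have hNsum : ∑ i ∈ Finset.range (N+2), zeck N i * fibF i = N := zeck_sum' (by omega)
  have hsplitN : ∑ i ∈ Finset.range (N+2), zeck N i * fibF i
      = ∑ i ∈ Finset.range (2*s+3), zeck N i * fibF i
        + ∑ i ∈ Finset.Ico (2*s+3) (N+2), zeck N i * fibF i := by
    simp only [Finset.range_eq_Ico]
    exact (Finset.sum_Ico_consecutive _ (by omega) (by omega)).symm
  have hlow0 : ∑ i ∈ Finset.range (2*s+3), zeck N i * fibF i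
      = ∑ j ∈ Finset.Icc 0 s, fibF (2*j) := by
    rw [Finset.sum_congr rfl (fun i hi => by rw [hpat i (Finset.mem_range.1 hi)])]
    exact sum_indic_even 0 s (2*s+3) (by omega) fibF
  have hsplitδ : ∑ i ∈ Finset.range (N+2), (if i < 2*s+3 then
        (if i % 2 = 0 ∧ 2*m ≤ i ∧ i ≤ 2*s then 1 else 0) else zeck N i) * fibF i
      = ∑ i ∈ Finset.range (2*s+3), (if i < 2*s+3 then
        (if i % 2 = 0 ∧ 2*m ≤ i ∧ i ≤ 2*s then 1 else 0) else zeck N i) * fibF i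
        + ∑ i ∈ Finset.Ico (2*s+3) (N+2), (if i < 2*s+3 then
        (if i % 2 = 0 ∧ 2*m ≤ i ∧ i ≤ 2*s then 1 else 0) else zeck N i) * fibF i := by
    simp only [Finset.range_eq_Ico]
    exact (Finset.sum_Ico_consecutive _ (by omega) (by omega)).symm
  have hlowm : ∑ i ∈ Finset.range (2*s+3), (if i < 2*s+3 then
        (if i % 2 = 0 ∧ 2*m ≤ i ∧ i ≤ 2*s then 1 else 0) else zeck N i) * fibF i
      = ∑ j ∈ Finset.Icc m s, fibF (2*j) := by
    rw [Finset.sum_congr rfl (fun i hi => by rw [if_pos (Finset.mem_range.1 hi)])]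
    exact sum_indic_even m s (2*s+3) (by omega) fibF
  have hhighδ : ∑ i ∈ Finset.Ico (2*s+3) (N+2), (if i < 2*s+3 then
        (if i % 2 = 0 ∧ 2*m ≤ i ∧ i ≤ 2*s then 1 else 0) else zeck N i) * fibF i
      = ∑ i ∈ Finset.Ico (2*s+3) (N+2), zeck N i * fibF i := by
    refine Finset.sum_congr rfl (fun i hi => ?_)
    rw [if_neg (by have := (Finset.mem_Ico.1 hi).1; omega)]
  have hf0 : fibF (2*0-1) = 1 := by norm_num [fibF]
  have i1 := fib_even_sum' (show (0:ℕ) ≤ s + 1 by omega)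
  have i2 := fib_even_sum' hms
  have hδsum : ∑ i ∈ Finset.range (N+2), (if i < 2*s+3 then
        (if i % 2 = 0 ∧ 2*m ≤ i ∧ i ≤ 2*s then 1 else 0) else zeck N i) * fibF i
      = N + 1 - fibF (2*m-1) := by
    rw [hsplitδ, hlowm, hhighδ]
    omega
  exact zeck_unique (N + 1 - fibF (2*m-1)) _ (N+2) hle1 hnc htail hδsum

lemma odd_zeck_succ {N : ℕ} (h0 : zeck N 0 = 1) :
    ∀ i, zeck (N + 1) i
      = if i = 2*(carryLen N)+1 then 1 else if i < 2*(carryLen N)+3 then 0 else zeck N i := by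
  have hpat := odd_pattern h0
  have h2s := odd_two_s_lt h0
  set s := carryLen N with hs
  clear_value s
  have hle1 : ∀ i, (if i = 2*s+1 then 1 else if i < 2*s+3 then 0 else zeck N i) ≤ 1 := by
    intro i; split_ifs <;> simp [zeck_le_one]
  have hnc : ∀ i, (if i+1 = 2*s+1 then 1 else if i+1 < 2*s+3 then 0 else zeck N (i+1)) = 1 →
      (if i = 2*s+1 then 1 else if i < 2*s+3 then 0 else zeck N i) = 0 := by
    intro i hi
    by_cases c1 : i + 1 = 2*s+1
    · rw [if_neg (by omega), if_pos (by omega)]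
    · rw [if_neg c1] at hi
      by_cases c2 : i + 1 < 2*s+3
      · rw [if_pos c2] at hi; omega
      · rw [if_neg c2] at hi
        by_cases c3 : i < 2*s+3
        · rw [if_neg (by omega), if_pos c3]
        · rw [if_neg (by omega), if_neg c3]
          exact zeck_noconsec N i hi
  have htail : ∀ i, N+2 ≤ i →
      (if i = 2*s+1 then 1 else if i < 2*s+3 then 0 else zeck N i) = 0 := by
    intro i hi
    rw [if_neg (by omega), if_neg (by omega)]
    exact zeck_eq_zero_of_lt N i (by omega)
  have hNsum : ∑ i ∈ Finset.range (N+2), zeck N i * fibF i = N := zeck_sum' (by omega)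
  have hsplitN : ∑ i ∈ Finset.range (N+2), zeck N i * fibF i
      = ∑ i ∈ Finset.range (2*s+3), zeck N i * fibF i
        + ∑ i ∈ Finset.Ico (2*s+3) (N+2), zeck N i * fibF i := by
    simp only [Finset.range_eq_Ico]
    exact (Finset.sum_Ico_consecutive _ (by omega) (by omega)).symm
  have hlow0 : ∑ i ∈ Finset.range (2*s+3), zeck N i * fibF i
      = ∑ j ∈ Finset.Icc 0 s, fibF (2*j) := by
    rw [Finset.sum_congr rfl (fun i hi => by rw [hpat i (Finset.mem_range.1 hi)])]
    exact sum_indic_even 0 s (2*s+3) (by omega) fibF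
  have hsplitδ : ∑ i ∈ Finset.range (N+2),
        (if i = 2*s+1 then 1 else if i < 2*s+3 then 0 else zeck N i) * fibF i
      = ∑ i ∈ Finset.range (2*s+3),
        (if i = 2*s+1 then 1 else if i < 2*s+3 then 0 else zeck N i) * fibF i
        + ∑ i ∈ Finset.Ico (2*s+3) (N+2),
        (if i = 2*s+1 then 1 else if i < 2*s+3 then 0 else zeck N i) * fibF i := by
    simp only [Finset.range_eq_Ico]
    exact (Finset.sum_Ico_consecutive _ (by omega) (by omega)).symm
  have hlowδ : ∑ i ∈ Finset.range (2*s+3),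
        (if i = 2*s+1 then 1 else if i < 2*s+3 then 0 else zeck N i) * fibF i
      = fibF (2*s+1) := by
    have hc : ∀ i ∈ Finset.range (2*s+3),
        (if i = 2*s+1 then 1 else if i < 2*s+3 then 0 else zeck N i) * fibF i
        = if i = 2*s+1 then fibF (2*s+1) else 0 := by
      intro i hi
      rcases eq_or_ne i (2*s+1) with rfl | hne
      · simp
      · rw [if_neg hne, if_neg hne, if_pos (Finset.mem_range.1 hi)]
        ring
    rw [Finset.sum_congr rfl hc,
      Finset.sum_ite_eq' (Finset.range (2*s+3)) (2*s+1) (fun _ => fibF (2*s+1)),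
      if_pos (Finset.mem_range.2 (by omega))]
  have hhighδ : ∑ i ∈ Finset.Ico (2*s+3) (N+2),
        (if i = 2*s+1 then 1 else if i < 2*s+3 then 0 else zeck N i) * fibF i
      = ∑ i ∈ Finset.Ico (2*s+3) (N+2), zeck N i * fibF i := by
    refine Finset.sum_congr rfl (fun i hi => ?_)
    have := (Finset.mem_Ico.1 hi).1
    rw [if_neg (by omega), if_neg (by omega)]
  have hf0 : fibF (2*0-1) = 1 := by norm_num [fibF]
  have i1 := fib_even_sum' (show (0:ℕ) ≤ s + 1 by omega)
  have hδsum : ∑ i ∈ Finset.range (N+2),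
        (if i = 2*s+1 then 1 else if i < 2*s+3 then 0 else zeck N i) * fibF i = N + 1 := by
    rw [hsplitδ, hlowδ, hhighδ]
    omega
  exact zeck_unique (N + 1) _ (N+2) hle1 hnc htail hδsum

end Transfer
section Algebra

variable {p : ℕ → ℝ} {z : ℂ}

lemma Pprod_zero (p : ℕ → ℝ) : Pprod p 0 = 1 := by
  unfold Pprod; simp

lemma Pprod_succ (p : ℕ → ℝ) (t : ℕ) : Pprod p (t+1) = Pprod p t * p (t+1) := by
  unfold Pprod
  rw [Finset.prod_Icc_succ_top (by omega)]

lemma Pprod_one (p : ℕ → ℝ) : Pprod p 1 = p 1 := by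
  rw [show (1:ℕ) = 0 + 1 from rfl, Pprod_succ, Pprod_zero]; ring

lemma Pprod_pos (hp : ∀ i, 1 ≤ i → 0 < p i ∧ p i ≤ 1) (t : ℕ) : 0 < Pprod p t := by
  unfold Pprod
  apply Finset.prod_pos
  intro i hi
  exact (hp i (Finset.mem_Icc.1 hi).1).1

lemma rr_even (p : ℕ → ℝ) (s : ℕ) : rr p (2*s+2) = p (s+2) := by
  unfold rr; congr 1; omega

lemma rr_odd (p : ℕ → ℝ) (s : ℕ) : rr p (2*s+3) = p (s+3) := by
  unfold rr; congr 1; omega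

lemma qF_even_step (s : ℕ) (hr : (p (s+2) : ℂ) ≠ 0) :
    qF p z (2*s) * qF p z (2*s+1)
      = (p (s+2) : ℂ) * qF p z (2*s+2) + 1 - (p (s+2) : ℂ) := by
  have e : qF p z (2*s+2) = (1/(rr p (2*s+2) : ℂ)) * qF p z (2*s+1) * qF p z (2*s)
      - (1/(rr p (2*s+2) : ℂ) - 1) := by rw [qF]
  rw [rr_even] at e
  rw [e]
  field_simp
  ring

lemma qF_odd_step (s : ℕ) (hr : (p (s+3) : ℂ) ≠ 0) :
    qF p z (2*s+1) * qF p z (2*s+2)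
      = (p (s+3) : ℂ) * qF p z (2*s+3) + 1 - (p (s+3) : ℂ) := by
  have e : qF p z (2*s+3) = (1/(rr p (2*s+3) : ℂ)) * qF p z (2*s+2) * qF p z (2*s+1)
      - (1/(rr p (2*s+3) : ℂ) - 1) := by rw [qF]
  rw [rr_odd] at e
  rw [e]
  field_simp
  ring

lemma qF_one_step (hr : (p 2 : ℂ) ≠ 0) :
    qF p z 0 * qF p z 0 = (p 2 : ℂ) * qF p z 1 + 1 - (p 2 : ℂ) := by
  have e : qF p z 1 = (1/(p 2 : ℂ)) * (qF p z 0)^2 - (1/(p 2 : ℂ) - 1) := by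
    simp only [qF]
  rw [e]
  field_simp
  ring

lemma identE (hp : ∀ i, 1 ≤ i → 0 < p i ∧ p i ≤ 1) (s : ℕ) :
    (p 1 : ℂ) * qF p z 0 * ∏ j ∈ Finset.Ico 0 s, qF p z (2*j+1)
      = (Pprod p (s+1) : ℂ) * qF p z (2*s)
        + ∑ m ∈ Finset.Icc 1 s, (Pprod p m : ℂ) * (1 - (p (m+1) : ℂ))
            * ∏ j ∈ Finset.Ico m s, qF p z (2*j+1) := by
  induction s with
  | zero =>
    simp only [Finset.Ico_self, Finset.prod_empty, mul_one, Finset.Icc_self]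
    rw [show Finset.Icc 1 0 = ∅ from rfl, Finset.sum_empty, Pprod_one]
    norm_num
  | succ s ih =>
    have hr : (p (s+2) : ℂ) ≠ 0 := by
      have := (hp (s+2) (by omega)).1
      exact_mod_cast this.ne'
    have hmul := qF_even_step (p := p) (z := z) s hr
    have hP : (Pprod p (s+2) : ℂ) = (Pprod p (s+1) : ℂ) * (p (s+2) : ℂ) := by
      rw [Pprod_succ p (s+1)]; push_cast; ring
    rw [Finset.prod_Ico_succ_top (Nat.zero_le s)]
    rw [Finset.sum_Icc_succ_top (by omega : 1 ≤ s+1)]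
    have hterm : ∀ m ∈ Finset.Icc 1 s,
        (Pprod p m : ℂ) * (1 - (p (m+1) : ℂ)) * ∏ j ∈ Finset.Ico m (s+1), qF p z (2*j+1)
        = ((Pprod p m : ℂ) * (1 - (p (m+1) : ℂ)) * ∏ j ∈ Finset.Ico m s, qF p z (2*j+1))
            * qF p z (2*s+1) := by
      intro m hm
      rw [Finset.prod_Ico_succ_top (Finset.mem_Icc.1 hm).2]
      ring
    rw [Finset.sum_congr rfl hterm, ← Finset.sum_mul]
    rw [Finset.Ico_self, Finset.prod_empty]
    rw [show 2*(s+1) = 2*s+2 by ring, show s+1+1 = s+2 from rfl]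
    linear_combination qF p z (2*s+1) * ih + (Pprod p (s+1) : ℂ) * hmul
      - qF p z (2*s+2) * hP

lemma identO (hp : ∀ i, 1 ≤ i → 0 < p i ∧ p i ≤ 1) (s : ℕ) :
    (p 1 : ℂ) * qF p z 0 * ∏ j ∈ Finset.Icc 0 s, qF p z (2*j)
      = (Pprod p (s+2) : ℂ) * qF p z (2*s+1)
        + ∑ m ∈ Finset.Icc 1 (s+1), (Pprod p m : ℂ) * (1 - (p (m+1) : ℂ))
            * ∏ j ∈ Finset.Icc m s, qF p z (2*j) := by
  induction s with
  | zero =>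
    have hr : (p 2 : ℂ) ≠ 0 := by
      have := (hp 2 (by omega)).1
      exact_mod_cast this.ne'
    have hmul := qF_one_step (p := p) (z := z) hr
    have hP : (Pprod p 2 : ℂ) = (p 1 : ℂ) * (p 2 : ℂ) := by
      rw [show (2:ℕ) = 1 + 1 from rfl, Pprod_succ, Pprod_one]; push_cast; ring
    simp only [Finset.Icc_self, Finset.prod_singleton]
    rw [Finset.sum_singleton]
    rw [show Finset.Icc 1 0 = ∅ from rfl, Finset.prod_empty]
    rw [show 2*0 = 0 by ring, show 2*0+1 = 1 by ring,
      Pprod_one]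
    linear_combination (p 1 : ℂ) * hmul - qF p z 1 * hP
  | succ s ih =>
    have hr : (p (s+3) : ℂ) ≠ 0 := by
      have := (hp (s+3) (by omega)).1
      exact_mod_cast this.ne'
    have hmul := qF_odd_step (p := p) (z := z) s hr
    have hP : (Pprod p (s+3) : ℂ) = (Pprod p (s+2) : ℂ) * (p (s+3) : ℂ) := by
      rw [show s+3 = (s+2)+1 from rfl, Pprod_succ p (s+2)]; push_cast; ring
    rw [Finset.prod_Icc_succ_top (Nat.zero_le (s+1))]
    rw [Finset.sum_Icc_succ_top (by omega : 1 ≤ s+2)]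
    have hterm : ∀ m ∈ Finset.Icc 1 (s+1),
        (Pprod p m : ℂ) * (1 - (p (m+1) : ℂ)) * ∏ j ∈ Finset.Icc m (s+1), qF p z (2*j)
        = ((Pprod p m : ℂ) * (1 - (p (m+1) : ℂ)) * ∏ j ∈ Finset.Icc m s, qF p z (2*j))
            * qF p z (2*(s+1)) := by
      intro m hm
      rw [Finset.prod_Icc_succ_top (Finset.mem_Icc.1 hm).2]
      ring
    rw [Finset.sum_congr rfl hterm, ← Finset.sum_mul]
    rw [show Finset.Icc (s+1+1) (s+1) = ∅ from Finset.Icc_eq_empty (by omega), Finset.prod_empty]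
    rw [show 2*(s+1)+1 = 2*s+3 by ring, show 2*(s+1) = 2*s+2 by ring]
    rw [show s+1+1+1 = s+3 from rfl, show s+1+2 = s+3 from rfl, show s+1+1 = s+2 from rfl]
    linear_combination qF p z (2*s+2) * ih + (Pprod p (s+2) : ℂ) * hmul
      - qF p z (2*s+3) * hP

end Algebra
section QRecSec

variable {p : ℕ → ℝ} {z : ℂ}

lemma prod_range_split (f : ℕ → ℂ) {a b : ℕ} (h : a ≤ b) :
    ∏ i ∈ Finset.range b, f i
      = (∏ i ∈ Finset.range a, f i) * ∏ i ∈ Finset.Ico a b, f i := by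
  simp only [Finset.range_eq_Ico]
  exact (Finset.prod_Ico_consecutive f (Nat.zero_le a) h).symm

lemma qN_eq_prod {N K : ℕ} (h : N < K) :
    qN p z N = ∏ i ∈ Finset.range K, qF p z i ^ zeck N i := by
  unfold qN
  refine Finset.prod_subset (Finset.range_subset_range.2 (by omega)) ?_
  intro x _ hx
  rw [zeck_eq_zero_of_lt N x (by simp at hx; omega), pow_zero]

lemma qrec_even {N : ℕ} (hp : ∀ i, 1 ≤ i → 0 < p i ∧ p i ≤ 1) (h0 : zeck N 0 = 0) :
    (p 1 : ℂ) * qF p z 0 * qN p z N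
      = (Pprod p (carryLen N + 1) : ℂ) * qN p z (N+1)
        + ∑ m ∈ Finset.Icc 1 (carryLen N), (Pprod p m : ℂ) * (1 - (p (m+1) : ℂ))
            * qN p z (N + 1 - fibF (2*m)) := by
  have hpat := even_pattern h0
  have h2s := even_two_s_le h0
  have hsucc := even_zeck_succ h0
  have hsub := fun (m : ℕ) (hm : m ≤ carryLen N) => even_zeck_sub h0 hm
  set s := carryLen N with hs
  clear_value s
  set H := ∏ i ∈ Finset.Ico (2*s+2) (N+2), qF p z i ^ zeck N i with hH
  have hqN : qN p z N = (∏ j ∈ Finset.Ico 0 s, qF p z (2*j+1)) * H := by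
    rw [qN_eq_prod (show N < N+2 by omega),
      prod_range_split _ (show 2*s+2 ≤ N+2 by omega)]
    congr 1
    rw [Finset.prod_congr rfl (fun i hi => by rw [hpat i (Finset.mem_range.1 hi)])]
    exact prod_indic_odd 0 s (2*s+2) (by omega) _
  have hqSucc : qN p z (N+1) = qF p z (2*s) * H := by
    rw [qN_eq_prod (show N+1 < N+2 by omega),
      prod_range_split _ (show 2*s+2 ≤ N+2 by omega)]
    have e1 : ∏ i ∈ Finset.range (2*s+2), qF p z i ^ zeck (N+1) i = qF p z (2*s) := by
      have hc : ∀ i ∈ Finset.range (2*s+2), qF p z i ^ zeck (N+1) i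
          = if i = 2*s then qF p z i else 1 := by
        intro i hi
        rw [hsucc i]
        rcases eq_or_ne i (2*s) with rfl | hne
        · rw [if_pos rfl, if_pos rfl, pow_one]
        · rw [if_neg hne, if_neg hne, if_pos (Finset.mem_range.1 hi), pow_zero]
      rw [Finset.prod_congr rfl hc,
        Finset.prod_ite_eq' (Finset.range (2*s+2)) (2*s) (fun i => qF p z i),
        if_pos (Finset.mem_range.2 (by omega))]
    have e2 : ∏ i ∈ Finset.Ico (2*s+2) (N+2), qF p z i ^ zeck (N+1) i = H := by
      refine Finset.prod_congr rfl (fun i hi => ?_)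
      have := (Finset.mem_Ico.1 hi).1
      rw [hsucc i, if_neg (by omega), if_neg (by omega)]
    rw [e1, e2]
  have hqSub : ∀ m ∈ Finset.Icc 1 s, qN p z (N+1-fibF (2*m))
      = (∏ j ∈ Finset.Ico m s, qF p z (2*j+1)) * H := by
    intro m hm
    obtain ⟨hm1, hm2⟩ := Finset.mem_Icc.1 hm
    rw [qN_eq_prod (show N+1-fibF (2*m) < N+2 by
        have := Nat.sub_le (N+1) (fibF (2*m)); omega),
      prod_range_split _ (show 2*s+2 ≤ N+2 by omega)]
    congr 1
    · rw [Finset.prod_congr rfl (fun i hi => by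
        rw [hsub m hm2 i, if_pos (Finset.mem_range.1 hi)])]
      exact prod_indic_odd m s (2*s+2) (by omega) _
    · refine Finset.prod_congr rfl (fun i hi => ?_)
      have := (Finset.mem_Ico.1 hi).1
      rw [hsub m hm2 i, if_neg (by omega)]
  have hsum : ∑ m ∈ Finset.Icc 1 s,
        (Pprod p m : ℂ) * (1 - (p (m+1) : ℂ)) * qN p z (N+1-fibF (2*m))
      = (∑ m ∈ Finset.Icc 1 s, (Pprod p m : ℂ) * (1 - (p (m+1) : ℂ))
          * ∏ j ∈ Finset.Ico m s, qF p z (2*j+1)) * H := by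
    rw [Finset.sum_mul]
    refine Finset.sum_congr rfl (fun m hm => ?_)
    rw [hqSub m hm]
    ring
  rw [hqN, hqSucc, hsum]
  linear_combination H * identE hp s

lemma qrec_odd {N : ℕ} (hp : ∀ i, 1 ≤ i → 0 < p i ∧ p i ≤ 1) (h0 : zeck N 0 = 1) :
    (p 1 : ℂ) * qF p z 0 * qN p z N
      = (Pprod p (carryLen N + 2) : ℂ) * qN p z (N+1)
        + ∑ m ∈ Finset.Icc 1 (carryLen N + 1), (Pprod p m : ℂ) * (1 - (p (m+1) : ℂ))
            * qN p z (N + 1 - fibF (2*m-1)) := by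
  have hpat := odd_pattern h0
  have h2s := odd_two_s_lt h0
  have hsucc := odd_zeck_succ h0
  have hsub := fun (m : ℕ) (hm : m ≤ carryLen N + 1) (hm1 : 1 ≤ m) =>
    odd_zeck_sub h0 hm hm1
  set s := carryLen N with hs
  clear_value s
  set H := ∏ i ∈ Finset.Ico (2*s+3) (N+2), qF p z i ^ zeck N i with hH
  have hqN : qN p z N = (∏ j ∈ Finset.Icc 0 s, qF p z (2*j)) * H := by
    rw [qN_eq_prod (show N < N+2 by omega),
      prod_range_split _ (show 2*s+3 ≤ N+2 by omega)]
    congr 1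
    rw [Finset.prod_congr rfl (fun i hi => by rw [hpat i (Finset.mem_range.1 hi)])]
    exact prod_indic_even 0 s (2*s+3) (by omega) _
  have hqSucc : qN p z (N+1) = qF p z (2*s+1) * H := by
    rw [qN_eq_prod (show N+1 < N+2 by omega),
      prod_range_split _ (show 2*s+3 ≤ N+2 by omega)]
    have e1 : ∏ i ∈ Finset.range (2*s+3), qF p z i ^ zeck (N+1) i = qF p z (2*s+1) := by
      have hc : ∀ i ∈ Finset.range (2*s+3), qF p z i ^ zeck (N+1) i
          = if i = 2*s+1 then qF p z i else 1 := by
        intro i hi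
        rw [hsucc i]
        rcases eq_or_ne i (2*s+1) with rfl | hne
        · rw [if_pos rfl, if_pos rfl, pow_one]
        · rw [if_neg hne, if_neg hne, if_pos (Finset.mem_range.1 hi), pow_zero]
      rw [Finset.prod_congr rfl hc,
        Finset.prod_ite_eq' (Finset.range (2*s+3)) (2*s+1) (fun i => qF p z i),
        if_pos (Finset.mem_range.2 (by omega))]
    have e2 : ∏ i ∈ Finset.Ico (2*s+3) (N+2), qF p z i ^ zeck (N+1) i = H := by
      refine Finset.prod_congr rfl (fun i hi => ?_)
      have := (Finset.mem_Ico.1 hi).1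
      rw [hsucc i, if_neg (by omega), if_neg (by omega)]
    rw [e1, e2]
  have hqSub : ∀ m ∈ Finset.Icc 1 (s+1), qN p z (N+1-fibF (2*m-1))
      = (∏ j ∈ Finset.Icc m s, qF p z (2*j)) * H := by
    intro m hm
    obtain ⟨hm1, hm2⟩ := Finset.mem_Icc.1 hm
    rw [qN_eq_prod (show N+1-fibF (2*m-1) < N+2 by
        have := Nat.sub_le (N+1) (fibF (2*m-1)); omega),
      prod_range_split _ (show 2*s+3 ≤ N+2 by omega)]
    congr 1
    · rw [Finset.prod_congr rfl (fun i hi => by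
        rw [hsub m hm2 hm1 i, if_pos (Finset.mem_range.1 hi)])]
      exact prod_indic_even m s (2*s+3) (by omega) _
    · refine Finset.prod_congr rfl (fun i hi => ?_)
      have := (Finset.mem_Ico.1 hi).1
      rw [hsub m hm2 hm1 i, if_neg (by omega)]
  have hsum : ∑ m ∈ Finset.Icc 1 (s+1),
        (Pprod p m : ℂ) * (1 - (p (m+1) : ℂ)) * qN p z (N+1-fibF (2*m-1))
      = (∑ m ∈ Finset.Icc 1 (s+1), (Pprod p m : ℂ) * (1 - (p (m+1) : ℂ))
          * ∏ j ∈ Finset.Icc m s, qF p z (2*j)) * H := by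
    rw [Finset.sum_mul]
    refine Finset.sum_congr rfl (fun m hm => ?_)
    rw [hqSub m hm]
    ring
  rw [hqN, hqSucc, hsum]
  linear_combination H * identO hp s

end QRecSec
section Row

variable {p : ℕ → ℝ}

lemma Smat_zero {N M : ℕ} (h : N + 2 ≤ M) : Smat p N M = 0 := by
  have h3 : ∀ t : ℕ, ¬ M = N + 1 - fibF t := fun t => by
    have := Nat.sub_le (N+1) (fibF t); omega
  unfold Smat
  simp [show ¬ M = N by omega, show ¬ M = N+1 by omega, h3]

lemma Smat_row (w : ℕ → ℂ) (N : ℕ) :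
    ∑' j : ℕ, (Smat p N j : ℂ) * w j
      = ∑ j ∈ Finset.range (N+2), (Smat p N j : ℂ) * w j := by
  refine tsum_eq_sum (fun b hb => ?_)
  rw [Smat_zero (show N+2 ≤ b by simp at hb; omega)]
  simp

lemma sum_single_mul (w : ℕ → ℂ) (c : ℂ) (t n : ℕ) (ht : t ∈ Finset.range n) :
    ∑ j ∈ Finset.range n, (if j = t then c else 0) * w j = c * w t := by
  have e : ∀ j, (if j = t then c else 0) * w j = if j = t then c * w j else 0 := by
    intro j; split_ifs <;> ring
  simp only [e]
  rw [Finset.sum_ite_eq' (Finset.range n) t (fun j => c * w j), if_pos ht]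

lemma row_eval (w : ℕ → ℂ) (N : ℕ) :
    ∑ j ∈ Finset.range (N+2), (Smat p N j : ℂ) * w j
      = (1 - (p 1 : ℂ)) * w N +
        (if zeck N 0 = 0 then
          (Pprod p (carryLen N + 1) : ℂ) * w (N+1)
            + ∑ m ∈ Finset.Icc 1 (carryLen N),
                (Pprod p m : ℂ) * (1 - (p (m+1) : ℂ)) * w (N+1-fibF (2*m))
         else
          (Pprod p (carryLen N + 2) : ℂ) * w (N+1)
            + ∑ m ∈ Finset.Icc 1 (carryLen N + 1),
                (Pprod p m : ℂ) * (1 - (p (m+1) : ℂ)) * w (N+1-fibF (2*m-1))) := by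
  by_cases h0 : zeck N 0 = 0
  · rw [if_pos h0]
    simp only [Smat, if_pos h0]
    simp only [Complex.ofReal_add, Complex.ofReal_sum, apply_ite Complex.ofReal,
      Complex.ofReal_zero, Complex.ofReal_sub, Complex.ofReal_one, Complex.ofReal_mul]
    simp only [add_mul]
    rw [Finset.sum_add_distrib, Finset.sum_add_distrib]
    rw [sum_single_mul w _ N (N+2) (Finset.mem_range.2 (by omega)),
      sum_single_mul w _ (N+1) (N+2) (Finset.mem_range.2 (by omega))]
    have hS3 : ∑ j ∈ Finset.range (N+2), (∑ m ∈ Finset.Icc 1 (carryLen N),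
        (if j = N + 1 - fibF (2*m) then (Pprod p m : ℂ) * (1 - (p (m+1) : ℂ)) else 0)) * w j
        = ∑ m ∈ Finset.Icc 1 (carryLen N),
            (Pprod p m : ℂ) * (1 - (p (m+1) : ℂ)) * w (N+1-fibF (2*m)) := by
      simp only [Finset.sum_mul]
      rw [Finset.sum_comm]
      refine Finset.sum_congr rfl (fun m hm => ?_)
      exact sum_single_mul w _ _ _ (Finset.mem_range.2
        (by have := Nat.sub_le (N+1) (fibF (2*m)); omega))
    rw [hS3]
  · rw [if_neg h0]
    simp only [Smat, if_neg h0]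
    simp only [Complex.ofReal_add, Complex.ofReal_sum, apply_ite Complex.ofReal,
      Complex.ofReal_zero, Complex.ofReal_sub, Complex.ofReal_one, Complex.ofReal_mul]
    simp only [add_mul]
    rw [Finset.sum_add_distrib, Finset.sum_add_distrib]
    rw [sum_single_mul w _ N (N+2) (Finset.mem_range.2 (by omega)),
      sum_single_mul w _ (N+1) (N+2) (Finset.mem_range.2 (by omega))]
    have hS3 : ∑ j ∈ Finset.range (N+2), (∑ m ∈ Finset.Icc 1 (carryLen N + 1),
        (if j = N + 1 - fibF (2*m-1) then (Pprod p m : ℂ) * (1 - (p (m+1) : ℂ)) else 0)) * w j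
        = ∑ m ∈ Finset.Icc 1 (carryLen N + 1),
            (Pprod p m : ℂ) * (1 - (p (m+1) : ℂ)) * w (N+1-fibF (2*m-1)) := by
      simp only [Finset.sum_mul]
      rw [Finset.sum_comm]
      refine Finset.sum_congr rfl (fun m hm => ?_)
      exact sum_single_mul w _ _ _ (Finset.mem_range.2
        (by have := Nat.sub_le (N+1) (fibF (2*m-1)); omega))
    rw [hS3]

lemma Smat_succ_pos (hp : ∀ i, 1 ≤ i → 0 < p i ∧ p i ≤ 1) (n : ℕ) :
    0 < Smat p n (n+1) := by
  have h3 : ∀ t : ℕ, ¬ n+1 = n+1 - fibF t := fun t => by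
    have := fibF_pos t; have := Nat.sub_le (n+1) (fibF t); omega
  unfold Smat
  simp only [show ¬ n+1 = n by omega, if_false, h3, if_true, eq_self_iff_true,
    Finset.sum_const_zero, add_zero, zero_add, if_neg, ite_false]
  split_ifs with h0
  · exact Pprod_pos hp _
  · exact Pprod_pos hp _

end Row
/-- A complex number `λ` is an eigenvalue of `S` acting on `ℓ∞(ℕ)`
(there is a nonzero bounded sequence `v` with `S v = λ v`) if and only if the sequence
`(q_n(λ))_{n ≥ 1}` is bounded; i.e. the point spectrum of `S` on `ℓ∞(ℕ)` equals
`{λ : (q_n(λ))_{n ≥ 1} is bounded}`. -/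
theorem stmt9 (p : ℕ → ℝ) (hp : ∀ i, 1 ≤ i → 0 < p i ∧ p i ≤ 1) (lam : ℂ) :
    (∃ v : ℕ → ℂ, (∃ C : ℝ, ∀ i, ‖v i‖ ≤ C) ∧ (∃ i, v i ≠ 0) ∧
      ∀ i : ℕ, ∑' j : ℕ, (Smat p i j : ℂ) * v j = lam * v i) ↔
    (∃ C : ℝ, ∀ n : ℕ, 1 ≤ n → ‖qN p lam n‖ ≤ C) := by
  have hp1 : (0:ℝ) < p 1 := (hp 1 le_rfl).1
  have hp1C : (p 1 : ℂ) ≠ 0 := by exact_mod_cast hp1.ne'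
  have hq0 : (p 1 : ℂ) * qF p lam 0 = lam - (1 - (p 1 : ℂ)) := by
    have e : qF p lam 0 = (lam - (1 - (p 1 : ℂ))) / (p 1 : ℂ) := by simp only [qF]
    rw [e]
    field_simp
  have hqzero : qN p lam 0 = 1 := by
    unfold qN
    rw [Finset.prod_range_one, zeck_zero, pow_zero]
  have hqrow : ∀ N, ∑' j : ℕ, (Smat p N j : ℂ) * qN p lam j = lam * qN p lam N := by
    intro N
    rw [Smat_row, row_eval]
    by_cases h0 : zeck N 0 = 0
    · rw [if_pos h0, ← qrec_even hp h0]
      linear_combination qN p lam N * hq0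
    · have h1 : zeck N 0 = 1 := by have := zeck_le_one N 0; omega
      rw [if_neg h0, ← qrec_odd hp h1]
      linear_combination qN p lam N * hq0
  constructor
  · rintro ⟨v, ⟨C, hC⟩, ⟨i0, hi0⟩, heq⟩
    have hKey : ∀ N, v N = v 0 * qN p lam N := by
      intro N
      induction N using Nat.strong_induction_on with
      | _ N ih =>
        match N with
        | 0 => rw [hqzero]; ring
        | (n+1) =>
          have hv := heq n
          rw [Smat_row] at hv
          have hq := hqrow n
          rw [Smat_row] at hq
          have hsub : ∑ j ∈ Finset.range (n+2), (Smat p n j : ℂ) * (v j - v 0 * qN p lam j)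
              = lam * v n - v 0 * (lam * qN p lam n) := by
            have e : ∀ j, (Smat p n j : ℂ) * (v j - v 0 * qN p lam j)
                = (Smat p n j : ℂ) * v j - v 0 * ((Smat p n j : ℂ) * qN p lam j) := by
              intro j; ring
            simp only [e]
            rw [Finset.sum_sub_distrib, hv, ← Finset.mul_sum, hq]
          rw [Finset.sum_range_succ] at hsub
          have hzero : ∀ j ∈ Finset.range (n+1),
              (Smat p n j : ℂ) * (v j - v 0 * qN p lam j) = 0 := by
            intro j hj
            rw [ih j (by have := Finset.mem_range.1 hj; omega)]
            ring
          rw [Finset.sum_eq_zero hzero, zero_add] at hsub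
          have hdn : v n = v 0 * qN p lam n := ih n (by omega)
          have hkill : (Smat p n (n+1) : ℂ) * (v (n+1) - v 0 * qN p lam (n+1)) = 0 := by
            rw [hdn] at hsub
            linear_combination hsub
          have hSne : (Smat p n (n+1) : ℂ) ≠ 0 := by
            have := Smat_succ_pos hp n
            exact_mod_cast this.ne'
          have := (mul_eq_zero.1 hkill).resolve_left hSne
          rw [sub_eq_zero] at this
          exact this
    have hv0 : v 0 ≠ 0 := by
      intro h
      apply hi0
      rw [hKey i0, h, zero_mul]
    refine ⟨C / ‖v 0‖, fun n _ => ?_⟩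
    have hCn := hC n
    rw [hKey n, norm_mul] at hCn
    rw [le_div_iff₀ (norm_pos_iff.2 hv0)]
    calc ‖qN p lam n‖ * ‖v 0‖ = ‖v 0‖ * ‖qN p lam n‖ := by ring
    _ ≤ C := hCn
  · rintro ⟨C, hC⟩
    refine ⟨qN p lam, ⟨max C 1, fun i => ?_⟩, ⟨0, by rw [hqzero]; exact one_ne_zero⟩,
      hqrow⟩
    rcases Nat.eq_zero_or_pos i with rfl | hi
    · rw [hqzero]
      simp
    · exact le_trans (hC i hi) (le_max_left C 1)
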